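/- Let ε > 0, δ > 0, σ ≥ 0, g ∈ ℓ², and let u : [0, ∞) → ℓ² be a continuously differentiable solution of the dissipative DNLS equation i u̇_n + (1/ε)(u_{n−1} − 2u_n + u_{n+1}) + iδ u_n + |u_n|^{2σ}u_n = g_n (n ∈ ℤ) with u(0) = u₀. Then for all t ≥ 0, ‖u(t)‖²_{ℓ²} ≤ ‖u₀‖²_{ℓ²} e^{−δt} + (1/δ²)‖g‖²_{ℓ²}(1 − e^{−δt}); in particular limsup_{t→∞} ‖u(t)‖²_{ℓ²} ≤ ‖g‖²_{ℓ²}/δ², so any ball of radius ρ₁ > ‖g‖_{ℓ²}/δ centered at 0 is an absorbing set. -/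

import Mathlib

open scoped ENNReal

open scoped ComplexConjugate InnerProductSpace
open Complex

local notation "H2" => lp (fun _ : ℤ => ℂ) 2

noncomputable section

open Complex

set_option maxHeartbeats 800000 in
lemma memℓp_shift (v : H2) (k : ℤ) : Memℓp (fun n : ℤ => v (n + k)) 2 := by
  apply memℓp_gen
  have h : Summable fun n : ℤ => ‖v n‖ ^ (2 : ℝ≥0∞).toReal :=
    (lp.memℓp v).summable (by norm_num)
  exact ((Equiv.addRight k).summable_iff).2 h

def shiftH (v : H2) (k : ℤ) : H2 := ⟨fun n => v (n + k), memℓp_shift v k⟩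

@[simp] lemma shiftH_apply (v : H2) (k n : ℤ) : shiftH v k n = v (n + k) := rfl

set_option maxHeartbeats 800000 in
lemma conj_inner_shift (v : H2) :
    conj (⟪v, shiftH v 1⟫_ℂ) = ⟪v, shiftH v (-1)⟫_ℂ := by
  rw [inner_conj_symm, lp.inner_eq_tsum, lp.inner_eq_tsum]
  have h1 : ∀ n : ℤ, ⟪shiftH v 1 n, v n⟫_ℂ = (fun m : ℤ => ⟪v m, shiftH v (-1) m⟫_ℂ) (n + 1) := by
    intro n
    simp [RCLike.inner_apply, shiftH_apply]
  calc (∑' n : ℤ, ⟪shiftH v 1 n, v n⟫_ℂ)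
      = ∑' n : ℤ, (fun m : ℤ => ⟪v m, shiftH v (-1) m⟫_ℂ) (n + 1) := by
        exact tsum_congr h1
    _ = ∑' m : ℤ, ⟪v m, shiftH v (-1) m⟫_ℂ :=
        by simpa using (Equiv.addRight (1:ℤ)).tsum_eq fun m : ℤ => ⟪v m, shiftH v (-1) m⟫_ℂ

set_option maxHeartbeats 800000 in
lemma im_inner_lap (v : H2) :
    (⟪v, shiftH v (-1) - (2:ℂ) • v + shiftH v 1⟫_ℂ).im = 0 := by
  rw [inner_add_right, inner_sub_right, inner_smul_right, ← conj_inner_shift]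
  have h0 : (⟪v, v⟫_ℂ).im = 0 := by
    rw [← RCLike.im_to_complex]; exact inner_self_im v
  set S := ⟪v, shiftH v 1⟫_ℂ
  simp [Complex.add_im, Complex.sub_im, Complex.mul_im, h0, Complex.conj_im]
  rw [← Complex.ofReal_pow, Complex.ofReal_im]; ring

set_option maxHeartbeats 800000 in
lemma memℓp_nl (σ : ℝ) (hσ : 0 ≤ σ) (v : H2) :
    Memℓp (fun n : ℤ => ((‖v n‖ ^ (2*σ) : ℝ) : ℂ) * v n) 2 := by
  apply memℓp_gen
  have hs : Summable fun n : ℤ => ‖v n‖ ^ (2 : ℝ≥0∞).toReal :=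
    (lp.memℓp v).summable (by norm_num)
  apply Summable.of_nonneg_of_le (fun n => by positivity)
    (fun n => ?_) (hs.mul_left ((‖v‖ ^ (2*σ)) ^ (2:ℝ≥0∞).toReal))
  have h1 : ‖(((‖v n‖ ^ (2*σ) : ℝ) : ℂ) * v n)‖
      = ‖v n‖ ^ (2*σ) * ‖v n‖ := by
    rw [norm_mul, Complex.norm_real]
    rw [Real.norm_eq_abs, _root_.abs_of_nonneg (by positivity : (0:ℝ) ≤ ‖v n‖ ^ (2*σ))]
  rw [h1, Real.mul_rpow (by positivity) (norm_nonneg _)]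
  have hle : ‖v n‖ ≤ ‖v‖ := by
    exact lp.norm_apply_le_norm (by norm_num) v n
  have h2 : ‖v n‖ ^ (2*σ) ≤ ‖v‖ ^ (2*σ) :=
    Real.rpow_le_rpow (by positivity) hle (by positivity)
  gcongr

def nlH (σ : ℝ) (hσ : 0 ≤ σ) (v : H2) : H2 :=
  ⟨fun n => ((‖v n‖ ^ (2*σ) : ℝ) : ℂ) * v n, memℓp_nl σ hσ v⟩

@[simp] lemma nlH_apply (σ : ℝ) (hσ : 0 ≤ σ) (v : H2) (n : ℤ) :
    nlH σ hσ v n = ((‖v n‖ ^ (2*σ) : ℝ) : ℂ) * v n := rfl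

set_option maxHeartbeats 800000 in
lemma im_inner_nl (σ : ℝ) (hσ : 0 ≤ σ) (v : H2) :
    (⟪v, nlH σ hσ v⟫_ℂ).im = 0 := by
  rw [← Complex.conj_eq_iff_im]
  rw [lp.inner_eq_tsum]
  rw [← Complex.star_def, tsum_star]
  apply tsum_congr
  intro n
  simp only [RCLike.inner_apply, nlH_apply, Complex.star_def, map_mul,
    Complex.conj_ofReal, Complex.conj_conj, RCLike.star_def]
  ring

set_option maxHeartbeats 1600000 in
/-- Absorbing-ball estimate for the dissipative DNLS:
`‖u(t)‖² ≤ ‖u₀‖² e^(−δt) + (1/δ²)‖g‖²(1 − e^(−δt))`, and in particular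
`limsup_{t→∞} ‖u(t)‖² ≤ ‖g‖²/δ²`. -/
theorem stmt_14 (ε δ σ : ℝ) (hε : 0 < ε) (hδ : 0 < δ) (hσ : 0 ≤ σ)
    (g : lp (fun _ : ℤ => ℂ) 2)
    (u u' : ℝ → lp (fun _ : ℤ => ℂ) 2)
    (hu : ∀ t ∈ Set.Ici (0:ℝ), HasDerivAt u (u' t) t)
    (hu' : ContinuousOn u' (Set.Ici (0:ℝ)))
    (heq : ∀ t ∈ Set.Ici (0:ℝ), ∀ n : ℤ,
      Complex.I * u' t n + (1/ε : ℂ) * (u t (n-1) - 2 * u t n + u t (n+1))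
        + Complex.I * δ * u t n + (‖u t n‖ ^ (2 * σ) : ℝ) * u t n = g n)
    (u₀ : lp (fun _ : ℤ => ℂ) 2) (hu0 : u 0 = u₀) :
    (∀ t ∈ Set.Ici (0:ℝ),
      ‖u t‖^2 ≤ ‖u₀‖^2 * Real.exp (-δ * t)
        + (1/δ^2) * ‖g‖^2 * (1 - Real.exp (-δ * t))) ∧
    Filter.limsup (fun t => ‖u t‖^2) Filter.atTop ≤ ‖g‖^2 / δ^2 := by
  -- Step 1: express u' t via the equation, as an identity in lp
  have hud : ∀ t ∈ Set.Ici (0:ℝ), u' t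
      = (-Complex.I) • g + ((1/ε : ℂ) * Complex.I) •
          (shiftH (u t) (-1) - (2:ℂ) • (u t) + shiftH (u t) 1)
        + Complex.I • nlH σ hσ (u t) - (δ : ℂ) • (u t) := by
    intro t ht
    apply lp.ext
    funext n
    have h := heq t ht n
    have hn1 : n + -1 = n - 1 := by ring
    simp only [lp.coeFn_add, lp.coeFn_sub, lp.coeFn_smul, Pi.add_apply, Pi.sub_apply,
      Pi.smul_apply, smul_eq_mul, shiftH_apply, nlH_apply, hn1]
    linear_combination (-Complex.I) * h + (u' t n + (δ:ℂ) * u t n) * Complex.I_mul_I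
  -- Step 2: real part of ⟪u t, u' t⟫
  have hre : ∀ t ∈ Set.Ici (0:ℝ),
      (⟪u t, u' t⟫_ℂ).re = (⟪u t, g⟫_ℂ).im - δ * ‖u t‖^2 := by
    intro t ht
    rw [hud t ht]
    rw [inner_sub_right, inner_add_right, inner_add_right, inner_smul_right,
      inner_smul_right, inner_smul_right, inner_smul_right]
    have him2 := im_inner_lap (u t)
    have him3 := im_inner_nl σ hσ (u t)
    have him4 : (⟪u t, u t⟫_ℂ).im = 0 := by
      rw [← RCLike.im_to_complex]; exact inner_self_im (u t)
    have hre4 : (⟪u t, u t⟫_ℂ).re = ‖u t‖^2 := by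
      rw [← RCLike.re_to_complex]; exact inner_self_eq_norm_sq (u t)
    have hc : (1/(ε:ℂ)) = ((1/ε : ℝ) : ℂ) := by norm_cast
    rw [hc]
    simp only [Complex.add_re, Complex.sub_re, Complex.mul_re, Complex.mul_im,
      Complex.neg_re, Complex.neg_im, Complex.I_re, Complex.I_im,
      Complex.ofReal_re, Complex.ofReal_im, him2, him3, him4, hre4]
    ring
  -- Step 3: differential inequality
  have hbound : ∀ t ∈ Set.Ici (0:ℝ),
      2 * (⟪u t, u' t⟫_ℂ).re + δ * ‖u t‖^2 ≤ ‖g‖^2 / δ := by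
    intro t ht
    rw [hre t ht]
    have h1 : (⟪u t, g⟫_ℂ).im ≤ ‖u t‖ * ‖g‖ := by
      calc (⟪u t, g⟫_ℂ).im ≤ ‖⟪u t, g⟫_ℂ‖ := Complex.im_le_norm _
        _ = ‖⟪u t, g⟫_ℂ‖ := rfl
        _ ≤ ‖u t‖ * ‖g‖ := norm_inner_le_norm _ _
    have h2 : 2 * (‖u t‖ * ‖g‖) ≤ δ * ‖u t‖^2 + ‖g‖^2/δ := by
      rw [← sub_nonneg, show δ * ‖u t‖^2 + ‖g‖^2/δ - 2 * (‖u t‖ * ‖g‖)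
        = (δ * ‖u t‖ - ‖g‖)^2 / δ from by field_simp; ring]
      positivity
    nlinarith [h1, h2]
  -- Step 4: derivative of ‖u t‖²
  have hyd : ∀ t ∈ Set.Ici (0:ℝ),
      HasDerivAt (fun s => ‖u s‖^2) (2 * (⟪u t, u' t⟫_ℂ).re) t := by
    intro t ht
    have h1 := HasDerivAt.inner ℂ (hu t ht) (hu t ht)
    have h2 := Complex.reCLM.hasFDerivAt.comp_hasDerivAt t h1
    have hfun : (fun s => ‖u s‖^2) = fun s => Complex.reCLM ⟪u s, u s⟫_ℂ := by
      funext s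
      simp only [Complex.reCLM_apply]
      rw [← RCLike.re_to_complex]
      exact (inner_self_eq_norm_sq (u s)).symm
    rw [hfun]
    refine h2.congr_deriv ?_
    have : ⟪u' t, u t⟫_ℂ = (starRingEnd ℂ) ⟪u t, u' t⟫_ℂ := (inner_conj_symm _ _).symm
    simp only [map_add, Complex.reCLM_apply, this, Complex.add_re, Complex.conj_re]
    ring
  -- Step 5: Gronwall-type comparison
  set C : ℝ := ‖g‖^2 / δ with hC
  set φ : ℝ → ℝ := fun s => ‖u₀‖^2 + (C/δ) * (Real.exp (δ*s) - 1)
      - ‖u s‖^2 * Real.exp (δ*s) with hφ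
  have hφd : ∀ t ∈ Set.Ici (0:ℝ), HasDerivAt φ
      ((C/δ) * (Real.exp (δ*t) * δ)
        - (2 * (⟪u t, u' t⟫_ℂ).re * Real.exp (δ*t) + ‖u t‖^2 * (Real.exp (δ*t) * δ))) t := by
    intro t ht
    have he : HasDerivAt (fun s : ℝ => Real.exp (δ*s)) (Real.exp (δ*t) * δ) t := by
      simpa using ((hasDerivAt_id t).const_mul δ).exp
    have h1 : HasDerivAt (fun s => ‖u₀‖^2 + (C/δ) * (Real.exp (δ*s) - 1))
        ((C/δ) * (Real.exp (δ*t) * δ)) t := by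
      simpa using (((he.sub_const 1).const_mul (C/δ)).const_add (‖u₀‖^2))
    exact h1.sub ((hyd t ht).mul he)
  have hmono : MonotoneOn φ (Set.Ici (0:ℝ)) := by
    apply monotoneOn_of_deriv_nonneg (convex_Ici 0)
    · exact fun x hx => (hφd x hx).continuousAt.continuousWithinAt
    · intro x hx
      rw [interior_Ici] at hx
      exact ((hφd x (Set.mem_Ici.2 (le_of_lt hx))).differentiableAt).differentiableWithinAt
    · intro x hx
      rw [interior_Ici] at hx
      rw [(hφd x (Set.mem_Ici.2 (le_of_lt hx))).deriv]
      have hb := hbound x (Set.mem_Ici.2 (le_of_lt hx))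
      have hE := Real.exp_pos (δ*x)
      have hCd : (C/δ) * (Real.exp (δ*x) * δ) = C * Real.exp (δ*x) := by
        field_simp
      rw [hCd]
      nlinarith [mul_le_mul_of_nonneg_right hb hE.le]
  have main : ∀ t ∈ Set.Ici (0:ℝ),
      ‖u t‖^2 ≤ ‖u₀‖^2 * Real.exp (-δ * t)
        + (1/δ^2) * ‖g‖^2 * (1 - Real.exp (-δ * t)) := by
    intro t ht
    have h0 : φ 0 ≤ φ t := hmono (Set.self_mem_Ici) ht ht
    have hφ0 : φ 0 = 0 := by
      simp [hφ, hu0]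
    rw [hφ0] at h0
    have hz : ‖u t‖^2 * Real.exp (δ*t) ≤ ‖u₀‖^2 + (C/δ) * (Real.exp (δ*t) - 1) := by
      rw [hφ] at h0; linarith
    have hE := Real.exp_pos (δ*t)
    rw [show -δ*t = -(δ*t) by ring, Real.exp_neg]
    rw [← mul_le_mul_iff_of_pos_right hE]
    have hrhs : (‖u₀‖^2 * (Real.exp (δ*t))⁻¹
        + 1/δ^2 * ‖g‖^2 * (1 - (Real.exp (δ*t))⁻¹)) * Real.exp (δ*t)
        = ‖u₀‖^2 + (C/δ) * (Real.exp (δ*t) - 1) := by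
      rw [hC]
      field_simp
    rw [hrhs]
    exact hz
  refine ⟨main, ?_⟩
  -- Step 6: limsup
  have hexp : Filter.Tendsto (fun t : ℝ => Real.exp (-δ * t)) Filter.atTop (nhds 0) := by
    have h1 : Filter.Tendsto (fun t : ℝ => δ * t) Filter.atTop Filter.atTop :=
      Filter.Tendsto.const_mul_atTop hδ Filter.tendsto_id
    have := Real.tendsto_exp_neg_atTop_nhds_zero.comp h1
    simpa [Function.comp_def, neg_mul] using this
  have hbt : Filter.Tendsto (fun t : ℝ => ‖u₀‖^2 * Real.exp (-δ * t)
      + (1/δ^2) * ‖g‖^2 * (1 - Real.exp (-δ * t))) Filter.atTop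
      (nhds (‖u₀‖^2 * 0 + (1/δ^2) * ‖g‖^2 * (1 - 0))) := by
    exact ((tendsto_const_nhds.mul hexp).add
      (tendsto_const_nhds.mul (tendsto_const_nhds.sub hexp)))
  have hlim : Filter.limsup (fun t : ℝ => ‖u₀‖^2 * Real.exp (-δ * t)
      + (1/δ^2) * ‖g‖^2 * (1 - Real.exp (-δ * t))) Filter.atTop
      = ‖u₀‖^2 * 0 + (1/δ^2) * ‖g‖^2 * (1 - 0) := hbt.limsup_eq
  have hle : Filter.limsup (fun t => ‖u t‖^2) Filter.atTop
      ≤ Filter.limsup (fun t : ℝ => ‖u₀‖^2 * Real.exp (-δ * t)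
        + (1/δ^2) * ‖g‖^2 * (1 - Real.exp (-δ * t))) Filter.atTop := by
    apply Filter.limsup_le_limsup
    · filter_upwards [Filter.eventually_ge_atTop (0:ℝ)] with t ht
      exact main t ht
    · exact Filter.isCoboundedUnder_le_of_eventually_le Filter.atTop
        (x := 0) (Filter.Eventually.of_forall fun t => by positivity)
    · exact hbt.isBoundedUnder_le
  rw [hlim] at hle
  calc Filter.limsup (fun t => ‖u t‖^2) Filter.atTop
      ≤ ‖u₀‖^2 * 0 + (1/δ^2) * ‖g‖^2 * (1 - 0) := hle
    _ = ‖g‖^2 / δ^2 := by ring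

end
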